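/- arXiv:2009.01996 — 3 statements merged into one kernel-verified Lean document; each statement's English description precedes it below -/
import Mathlib

section
/- For k ≥ 2 and n = 8k, let G_{4k} be the graph obtained from the cycle C_{8k} on vertices v₀,...,v_{8k−1} by merging v_{2i} with v_{4k+2i} for each i ∈ [0, 2k−1], and merging v_{2j+1} with v_{2k+2j+1} for each j ∈ [0, k−1] ∪ [2k, 3k−1]. Then G_{4k} is isomorphic to the circulant graph C_{4k}(1, 2k−1). -/
open Finset

namespace LocalAntimagic

variable {V : Type*} [Fintype V] [DecidableEq V]

/-- The induced vertex label: sum of labels of edges incident to `v`. -/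
def inducedSum (G : SimpleGraph V) [DecidableRel G.Adj] (f : Sym2 V → ℕ) (v : V) : ℕ :=
  ∑ e ∈ G.incidenceFinset v, f e

/-- `f` is a local antimagic labeling of `G`: a bijection from the edge set onto
`{1, …, q}` (`q` the number of edges) such that adjacent vertices get distinct
induced sums. -/
def IsLocalAntimagic (G : SimpleGraph V) [DecidableRel G.Adj] (f : Sym2 V → ℕ) : Prop :=
  Set.BijOn f G.edgeSet (Set.Icc 1 G.edgeFinset.card) ∧
  ∀ ⦃u v⦄, G.Adj u v → inducedSum G f u ≠ inducedSum G f v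

/-- The number of distinct induced vertex labels under `f`. -/
def colorCount (G : SimpleGraph V) [DecidableRel G.Adj] (f : Sym2 V → ℕ) : ℕ :=
  (Finset.image (inducedSum G f) Finset.univ).card

/-- The local antimagic chromatic number of `G` (`⊤` if no local antimagic
labeling exists). -/
noncomputable def chiLA (G : SimpleGraph V) [DecidableRel G.Adj] : ℕ∞ :=
  sInf {n : ℕ∞ | ∃ f : Sym2 V → ℕ, IsLocalAntimagic G f ∧ (colorCount G f : ℕ∞) = n}

/-- The circulant graph on `ℤ/nℤ` with connection set `S`. -/
def circulant (n : ℕ) [NeZero n] (S : Finset (ZMod n)) : SimpleGraph (ZMod n) where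
  Adj u v := u ≠ v ∧ (u - v ∈ S ∨ v - u ∈ S)
  symm := ⟨fun u v h => ⟨h.1.symm, h.2.symm⟩⟩
  loopless := ⟨fun v h => h.1 rfl⟩

instance (n : ℕ) [NeZero n] (S : Finset (ZMod n)) : DecidableRel (circulant n S).Adj :=
  fun u v => inferInstanceAs (Decidable (u ≠ v ∧ (u - v ∈ S ∨ v - u ∈ S)))

/-- The cycle `C_n` as a circulant graph on `ℤ/nℤ`. -/
def cycle (n : ℕ) [NeZero n] : SimpleGraph (ZMod n) := circulant n {1}

instance (n : ℕ) [NeZero n] : DecidableRel (cycle n).Adj :=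
  inferInstanceAs (DecidableRel (circulant n {1}).Adj)

/-- The graph obtained from `G` by merging vertices according to the
identification map `q` (adjacent iff distinct and some preimages are adjacent). -/
def mergeGraph {V' W : Type*} (G : SimpleGraph V') (q : V' → W) : SimpleGraph W where
  Adj a b := a ≠ b ∧ ∃ u v, q u = a ∧ q v = b ∧ G.Adj u v
  symm := ⟨by
    rintro a b ⟨hab, u, v, hu, hv, huv⟩
    exact ⟨hab.symm, v, u, hv, hu, huv.symm⟩⟩
  loopless := ⟨fun a h => h.1 rfl⟩

end LocalAntimagic

section Stmt15Aux


def qn (k m : ℕ) : ℕ :=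
  if Even m then m % (4 * k)
  else if m < 2 * k then m
  else if m < 6 * k then m - 2 * k
  else m - 4 * k

lemma mod4 (k m : ℕ) (h : m < 8 * k) :
    m % (4 * k) = if m < 4 * k then m else m - 4 * k := by
  rcases lt_or_ge m (4 * k) with h1 | h1
  · rw [if_pos h1, Nat.mod_eq_of_lt h1]
  · rw [if_neg (not_lt.2 h1), Nat.mod_eq_sub_mod h1, Nat.mod_eq_of_lt (by omega)]

lemma mod8 (k m : ℕ) (h : m < 8 * k) :
    (m + 1) % (8 * k) = if m + 1 = 8 * k then 0 else m + 1 := by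
  split_ifs with h1
  · rw [h1, Nat.mod_self]
  · exact Nat.mod_eq_of_lt (by omega)

lemma qn_eq (k m : ℕ) (hm : m < 8 * k) :
    qn k m = if m % 2 = 0 then (if m < 4 * k then m else m - 4 * k)
      else if m < 2 * k then m else if m < 6 * k then m - 2 * k else m - 4 * k := by
  simp only [qn, mod4 k m hm, Nat.even_iff]

lemma qn_step (k m : ℕ) (hk : 2 ≤ k) (hm : m < 8 * k) :
    qn k ((m + 1) % (8 * k)) = qn k m + 1 ∨
    qn k ((m + 1) % (8 * k)) + 4 * k = qn k m + 1 ∨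
    qn k ((m + 1) % (8 * k)) = qn k m + (2 * k + 1) ∨
    qn k ((m + 1) % (8 * k)) + 2 * k = qn k m + 1 ∨
    qn k ((m + 1) % (8 * k)) + 4 * k = qn k m + (2 * k + 1) := by
  rw [mod8 k m hm]
  by_cases hw : m + 1 = 8 * k
  · rw [if_pos hw, qn_eq k 0 (by omega), qn_eq k m hm]
    split_ifs <;> omega
  · rw [if_neg hw, qn_eq k (m + 1) (by omega), qn_eq k m hm]
    split_ifs <;> omega

lemma exists_up (k b : ℕ) (hk : 2 ≤ k) (hb : b < 4 * k) :
    ∃ m, m < 8 * k ∧ qn k m = b ∧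
      (qn k ((m + 1) % (8 * k)) = b + 1 ∨
       (qn k ((m + 1) % (8 * k)) = 0 ∧ b + 1 = 4 * k)) := by
  by_cases hb2 : b < 2 * k
  · refine ⟨b, by omega, ?_, ?_⟩
    · rw [qn_eq k b (by omega)]; split_ifs <;> omega
    · rw [mod8 k b (by omega), if_neg (by omega), qn_eq k (b + 1) (by omega)]
      split_ifs <;> omega
  · refine ⟨b + 4 * k, by omega, ?_, ?_⟩
    · rw [qn_eq k _ (by omega)]; split_ifs <;> omega
    · rw [mod8 k _ (by omega)]
      by_cases hw : b + 4 * k + 1 = 8 * k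
      · rw [if_pos hw, qn_eq k 0 (by omega)]; split_ifs <;> omega
      · rw [if_neg hw, qn_eq k (b + 4 * k + 1) (by omega)]; split_ifs <;> omega

lemma exists_skip (k a : ℕ) (hk : 2 ≤ k) (ha : a < 4 * k) :
    ∃ m, m + 1 < 8 * k ∧ qn k m = a ∧
      (qn k (m + 1) = a + (2 * k + 1) ∨ qn k (m + 1) + 2 * k = a + 1) := by
  by_cases h2 : a % 2 = 0
  · by_cases h3 : a < 2 * k
    · refine ⟨a + 4 * k, by omega, ?_, ?_⟩
      · rw [qn_eq k _ (by omega)]; split_ifs <;> omega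
      · rw [qn_eq k _ (by omega)]; split_ifs <;> omega
    · refine ⟨a, by omega, ?_, ?_⟩
      · rw [qn_eq k _ (by omega)]; split_ifs <;> omega
      · rw [qn_eq k _ (by omega)]; split_ifs <;> omega
  · refine ⟨a + 2 * k, by omega, ?_, ?_⟩
    · rw [qn_eq k _ (by omega)]; split_ifs <;> omega
    · rw [qn_eq k _ (by omega)]; split_ifs <;> omega

open LocalAntimagic in
theorem stmt15aux (k : ℕ) [NeZero k] (hk : 2 ≤ k) :
    Nonempty
      (mergeGraph (cycle (8 * k))
        (fun x : ZMod (8 * k) => ((qn k x.val : ℕ) : ZMod (4 * k))) ≃g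
       circulant (4 * k) {1, ((2 * k - 1 : ℕ) : ZMod (4 * k))}) := by
  haveI hf8 : Fact (1 < 8 * k) := ⟨by omega⟩
  haveI hf4 : Fact (1 < 4 * k) := ⟨by omega⟩
  set c : ZMod (4 * k) := ((2 * k - 1 : ℕ) : ZMod (4 * k)) with hcdef
  set c' : ZMod (4 * k) := ((2 * k + 1 : ℕ) : ZMod (4 * k)) with hc'def
  set Q : ZMod (8 * k) → ZMod (4 * k) :=
    (fun x : ZMod (8 * k) => ((qn k x.val : ℕ) : ZMod (4 * k))) with hQdef
  have h4 : (4 : ZMod (4 * k)) * (k : ZMod (4 * k)) = 0 := by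
    exact_mod_cast ZMod.natCast_self (4 * k)
  have hc : c + c' = 0 := by
    rw [hcdef, hc'def, ← Nat.cast_add, show 2 * k - 1 + (2 * k + 1) = 4 * k by omega,
      ZMod.natCast_self]
  have hval : ∀ v : ZMod (8 * k), (v + 1).val = (v.val + 1) % (8 * k) := by
    intro v; rw [ZMod.val_add, ZMod.val_one]
  have hvne : ∀ v : ZMod (8 * k), v + 1 ≠ v := by
    intro v h
    have h1 : (1 : ZMod (8 * k)) = 0 := by linear_combination h
    exact one_ne_zero h1
  have hcyc : ∀ u v : ZMod (8 * k),
      (cycle (8 * k)).Adj u v ↔ (u ≠ v ∧ (u - v = 1 ∨ v - u = 1)) := by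
    intro u v
    have h : (cycle (8 * k)).Adj u v ↔ (u ≠ v ∧
        (u - v ∈ ({1} : Finset (ZMod (8 * k))) ∨ v - u ∈ ({1} : Finset (ZMod (8 * k))))) :=
      Iff.rfl
    rw [h]; simp only [Finset.mem_singleton]
  have hQstep : ∀ v : ZMod (8 * k), Q (v + 1) = Q v + 1 ∨ Q (v + 1) = Q v + c' := by
    intro v
    have hm := ZMod.val_lt v
    have he : Q (v + 1) = ((qn k ((v.val + 1) % (8 * k)) : ℕ) : ZMod (4 * k)) := by
      show ((qn k (v + 1).val : ℕ) : ZMod (4 * k)) = _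
      rw [hval v]
    have hev : Q v = ((qn k v.val : ℕ) : ZMod (4 * k)) := rfl
    rcases qn_step k v.val hk hm with h | h | h | h | h
    · left; rw [he, hev, h]; push_cast; ring
    · left; rw [he, hev]
      have hc2 := congrArg (Nat.cast : ℕ → ZMod (4 * k)) h
      push_cast at hc2
      linear_combination hc2 - h4
    · right; rw [he, hev, hc'def, h]; push_cast; ring
    · right; rw [he, hev, hc'def]
      have hc2 := congrArg (Nat.cast : ℕ → ZMod (4 * k)) h
      push_cast at hc2
      push_cast
      linear_combination hc2 - h4
    · right; rw [he, hev, hc'def]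
      have hc2 := congrArg (Nat.cast : ℕ → ZMod (4 * k)) h
      push_cast at hc2
      push_cast
      linear_combination hc2 - h4
  have hup : ∀ b : ZMod (4 * k), ∃ v : ZMod (8 * k), Q v = b ∧ Q (v + 1) = b + 1 := by
    intro b
    obtain ⟨m, hm8, hqm, hstep⟩ := exists_up k b.val hk (ZMod.val_lt b)
    have hvm : ((m : ZMod (8 * k))).val = m := ZMod.val_natCast_of_lt hm8
    have hbb : ((b.val : ℕ) : ZMod (4 * k)) = b := by rw [ZMod.natCast_val, ZMod.cast_id]
    refine ⟨(m : ZMod (8 * k)), ?_, ?_⟩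
    · show ((qn k ((m : ZMod (8 * k))).val : ℕ) : ZMod (4 * k)) = b
      rw [hvm, hqm, hbb]
    · show ((qn k (((m : ZMod (8 * k)) + 1)).val : ℕ) : ZMod (4 * k)) = b + 1
      rw [hval, hvm]
      rcases hstep with h | ⟨h, h4k⟩
      · rw [h, Nat.cast_add, Nat.cast_one, hbb]
      · have h0 : b + 1 = 0 := by
          have h1 : ((b.val + 1 : ℕ) : ZMod (4 * k)) = 0 := by
            rw [h4k]; exact ZMod.natCast_self _
          rwa [Nat.cast_add, Nat.cast_one, hbb] at h1
        rw [h, h0, Nat.cast_zero]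
  have hskip : ∀ a : ZMod (4 * k), ∃ v : ZMod (8 * k), Q v = a ∧ Q (v + 1) = a + c' := by
    intro a
    obtain ⟨m, hm8, hqm, hstep⟩ := exists_skip k a.val hk (ZMod.val_lt a)
    have hvm : ((m : ZMod (8 * k))).val = m := ZMod.val_natCast_of_lt (by omega)
    have haa : ((a.val : ℕ) : ZMod (4 * k)) = a := by rw [ZMod.natCast_val, ZMod.cast_id]
    refine ⟨(m : ZMod (8 * k)), ?_, ?_⟩
    · show ((qn k ((m : ZMod (8 * k))).val : ℕ) : ZMod (4 * k)) = a
      rw [hvm, hqm, haa]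
    · show ((qn k (((m : ZMod (8 * k)) + 1)).val : ℕ) : ZMod (4 * k)) = a + c'
      rw [hval, hvm, Nat.mod_eq_of_lt hm8, hc'def]
      rcases hstep with h | h
      · rw [h, Nat.cast_add, haa]
      · have hc2 := congrArg (Nat.cast : ℕ → ZMod (4 * k)) h
        rw [Nat.cast_add, Nat.cast_add, Nat.cast_one, haa] at hc2
        push_cast at hc2 ⊢
        linear_combination hc2 - h4
  have hM : ∀ x y : ZMod (4 * k),
      (mergeGraph (cycle (8 * k)) Q).Adj x y ↔
        (x ≠ y ∧ ∃ u v, Q u = x ∧ Q v = y ∧ (cycle (8 * k)).Adj u v) := fun _ _ => Iff.rfl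
  have hC : ∀ x y : ZMod (4 * k),
      (circulant (4 * k) {1, c}).Adj x y ↔
        (x ≠ y ∧ ((x - y = 1 ∨ x - y = c) ∨ (y - x = 1 ∨ y - x = c))) := by
    intro x y
    have h : (circulant (4 * k) {1, c}).Adj x y ↔ (x ≠ y ∧
        (x - y ∈ ({1, c} : Finset (ZMod (4 * k))) ∨
         y - x ∈ ({1, c} : Finset (ZMod (4 * k))))) := Iff.rfl
    rw [h]; simp only [Finset.mem_insert, Finset.mem_singleton]
  refine ⟨⟨Equiv.refl _, @fun a b => ?_⟩⟩
  simp only [Equiv.refl_apply]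
  rw [hC a b, hM a b]
  constructor
  · rintro ⟨hab, hor⟩
    refine ⟨hab, ?_⟩
    rcases hor with (h | h) | (h | h)
    · obtain ⟨v, hv, hv1⟩ := hup b
      exact ⟨v + 1, v, by rw [hv1]; linear_combination -h, hv,
        (hcyc _ _).mpr ⟨hvne v, Or.inl (by ring)⟩⟩
    · obtain ⟨v, hv, hv1⟩ := hskip a
      exact ⟨v, v + 1, hv, by rw [hv1]; linear_combination h + hc,
        (hcyc _ _).mpr ⟨fun hh => hvne v hh.symm, Or.inr (by ring)⟩⟩
    · obtain ⟨v, hv, hv1⟩ := hup a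
      exact ⟨v, v + 1, hv, by rw [hv1]; linear_combination -h,
        (hcyc _ _).mpr ⟨fun hh => hvne v hh.symm, Or.inr (by ring)⟩⟩
    · obtain ⟨v, hv, hv1⟩ := hskip b
      exact ⟨v + 1, v, by rw [hv1]; linear_combination h + hc, hv,
        (hcyc _ _).mpr ⟨hvne v, Or.inl (by ring)⟩⟩
  · rintro ⟨hab, u, v, hu, hv, hadj⟩
    obtain ⟨hne, hor⟩ := (hcyc u v).mp hadj
    refine ⟨hab, ?_⟩
    rcases hor with h | h
    · have hu1 : u = v + 1 := by linear_combination h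
      rcases hQstep v with hs | hs
      · exact Or.inl (Or.inl (by rw [← hu, ← hv, hu1, hs]; ring))
      · exact Or.inr (Or.inr (by rw [← hu, ← hv, hu1, hs]; linear_combination -hc))
    · have hv1 : v = u + 1 := by linear_combination h
      rcases hQstep u with hs | hs
      · exact Or.inr (Or.inl (by rw [← hu, ← hv, hv1, hs]; ring))
      · exact Or.inl (Or.inr (by rw [← hu, ← hv, hv1, hs]; linear_combination -hc))

end Stmt15Aux
open LocalAntimagic in
/-- merging `v_{2i}` with `v_{4k+2i}` (`i ∈ [0,2k−1]`) and
`v_{2j+1}` with `v_{2k+2j+1}` (`j ∈ [0,k−1] ∪ [2k,3k−1]`) in `C_{8k}` yields a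
graph isomorphic to the circulant graph `C_{4k}(1, 2k−1)`. -/
theorem stmt15 (k : ℕ) [NeZero k] (hk : 2 ≤ k) :
    Nonempty
      (mergeGraph (cycle (8 * k))
        (fun x : ZMod (8 * k) =>
          ((if Even x.val then x.val % (4 * k)
            else if x.val < 2 * k then x.val
            else if x.val < 6 * k then x.val - 2 * k
            else x.val - 4 * k : ℕ) : ZMod (4 * k))) ≃g
       circulant (4 * k) {1, ((2 * k - 1 : ℕ) : ZMod (4 * k))}) := stmt15aux k hk
end

section
/- For s ≥ 2 and t ≥ 0, the local antimagic chromatic number of the circulant graph C_{2^s(t+2)}(1, 2t+3, 2t+5, 4t+7, ..., 1+(2^{s−2}−1)(2t+4), 2t+3+(2^{s−2}−1)(2t+4)) equals 3. -/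
open Finset

namespace Stmt17Aux
open LocalAntimagic

section General
variable {V : Type*} [Fintype V] [DecidableEq V]

lemma inducedSum_eq_sum_neighbors (G : SimpleGraph V) [DecidableRel G.Adj]
    (f : Sym2 V → ℕ) (v : V) :
    inducedSum G f v = ∑ w ∈ G.neighborFinset v, f s(v, w) := by
  have h : G.incidenceFinset v = (G.neighborFinset v).image (fun w => s(v, w)) := by
    ext e
    simp only [SimpleGraph.mem_incidenceFinset, SimpleGraph.incidenceSet, Set.mem_setOf_eq,
      Finset.mem_image, SimpleGraph.mem_neighborFinset]
    constructor
    · rintro ⟨he, hv⟩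
      obtain ⟨w, rfl⟩ := Sym2.mem_iff_exists.mp hv
      exact ⟨w, (G.mem_edgeSet).mp he, rfl⟩
    · rintro ⟨w, hw, rfl⟩
      exact ⟨(G.mem_edgeSet).mpr hw, Sym2.mem_mk_left v w⟩
  rw [inducedSum, h, Finset.sum_image]
  intro a _ b _ hab
  exact Sym2.congr_right.mp hab

lemma sum_inducedSum_eq (G : SimpleGraph V) [DecidableRel G.Adj]
    (f : Sym2 V → ℕ) (A : Finset V)
    (hA : ∀ ⦃a b⦄, G.Adj a b → (a ∈ A ↔ b ∉ A)) :
    ∑ v ∈ A, inducedSum G f v = ∑ e ∈ G.edgeFinset, f e := by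
  unfold inducedSum
  calc ∑ v ∈ A, ∑ e ∈ G.incidenceFinset v, f e
      = ∑ v ∈ A, ∑ e ∈ G.edgeFinset, if v ∈ e then f e else 0 := by
        refine Finset.sum_congr rfl fun v _ => ?_
        rw [G.incidenceFinset_eq_filter v, Finset.sum_filter]
    _ = ∑ e ∈ G.edgeFinset, ∑ v ∈ A, if v ∈ e then f e else 0 := Finset.sum_comm
    _ = ∑ e ∈ G.edgeFinset, f e := by
        refine Finset.sum_congr rfl fun e he => ?_
        rw [SimpleGraph.mem_edgeFinset] at he
        induction e with
        | _ a b =>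
          have hadj : G.Adj a b := (G.mem_edgeSet).mp he
          by_cases ha : a ∈ A
          · have hb : b ∉ A := (hA hadj).mp ha
            have step : ∀ v ∈ A, (if v ∈ s(a,b) then f s(a,b) else 0)
                = if v = a then f s(a,b) else 0 := by
              intro v hv
              by_cases hvb : v = b
              · exact absurd (hvb ▸ hv) hb
              · simp only [Sym2.mem_iff, hvb, or_false]
            rw [Finset.sum_congr rfl step, Finset.sum_ite_eq' A a (fun _ => f s(a,b)), if_pos ha]
          · have hb : b ∈ A := by
              by_contra hb
              exact ha ((hA hadj).mpr hb)
            have step : ∀ v ∈ A, (if v ∈ s(a,b) then f s(a,b) else 0)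
                = if v = b then f s(a,b) else 0 := by
              intro v hv
              by_cases hva : v = a
              · exact absurd (hva ▸ hv) ha
              · simp only [Sym2.mem_iff, hva, false_or]
            rw [Finset.sum_congr rfl step, Finset.sum_ite_eq' A b (fun _ => f s(a,b)), if_pos hb]

lemma sum_degree_eq (G : SimpleGraph V) [DecidableRel G.Adj] (A : Finset V)
    (hA : ∀ ⦃a b⦄, G.Adj a b → (a ∈ A ↔ b ∉ A)) :
    ∑ v ∈ A, G.degree v = G.edgeFinset.card := by
  have h := sum_inducedSum_eq G (fun _ => 1) A hA
  simp only [inducedSum, Finset.sum_const, smul_eq_mul, mul_one] at h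
  rw [← h]
  refine Finset.sum_congr rfl fun v _ => ?_
  exact (G.card_incidenceFinset_eq_degree v).symm

lemma three_le_colorCount [Nonempty V] (G : SimpleGraph V) [DecidableRel G.Adj]
    (r : ℕ) (hr : 0 < r) (hreg : ∀ v, G.degree v = r)
    {a₀ b₀ : V} (hedge : G.Adj a₀ b₀)
    {f : Sym2 V → ℕ} (hf : IsLocalAntimagic G f) : 3 ≤ colorCount G f := by
  by_contra hlt
  push_neg at hlt
  set I := Finset.image (inducedSum G f) Finset.univ with hI
  have hmemI : ∀ v : V, inducedSum G f v ∈ I := fun v =>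
    Finset.mem_image_of_mem _ (Finset.mem_univ v)
  have h1 : 1 ≤ I.card := Finset.card_pos.mpr ⟨_, hmemI (Classical.arbitrary V)⟩
  have h12 : I.card = 1 ∨ I.card = 2 := by
    have : colorCount G f = I.card := rfl
    omega
  rcases h12 with h | h
  · obtain ⟨x, hx⟩ := Finset.card_eq_one.mp h
    have ha := hmemI a₀
    have hb := hmemI b₀
    rw [hx, Finset.mem_singleton] at ha hb
    exact hf.2 hedge (ha.trans hb.symm)
  · obtain ⟨x, y, hxy, hxyI⟩ := Finset.card_eq_two.mp h
    have hval : ∀ v : V, inducedSum G f v = x ∨ inducedSum G f v = y := by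
      intro v
      have := hmemI v
      rw [hxyI, Finset.mem_insert, Finset.mem_singleton] at this
      exact this
    set A : Finset V := Finset.univ.filter (fun v => inducedSum G f v = x) with hA
    set B : Finset V := Finset.univ.filter (fun v => inducedSum G f v = y) with hB
    have hmemA : ∀ v, v ∈ A ↔ inducedSum G f v = x := by
      intro v; simp [hA]
    have hmemB : ∀ v, v ∈ B ↔ inducedSum G f v = y := by
      intro v; simp [hB]
    have hAprop : ∀ ⦃a b⦄, G.Adj a b → (a ∈ A ↔ b ∉ A) := by
      intro a b hab
      rw [hmemA, hmemA]
      constructor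
      · intro hax hbx
        exact hf.2 hab (hax.trans hbx.symm)
      · intro hbx
        rcases hval a with h' | h'
        · exact h'
        · rcases hval b with h'' | h''
          · exact absurd h'' hbx
          · exact absurd (h'.trans h''.symm) (hf.2 hab)
    have hBprop : ∀ ⦃a b⦄, G.Adj a b → (a ∈ B ↔ b ∉ B) := by
      intro a b hab
      rw [hmemB, hmemB]
      constructor
      · intro hay hby
        exact hf.2 hab (hay.trans hby.symm)
      · intro hby
        rcases hval a with h' | h'
        · rcases hval b with h'' | h''
          · exact absurd (h'.trans h''.symm) (hf.2 hab)
          · exact absurd h'' hby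
        · exact h'
    have hsumA : A.card * x = ∑ e ∈ G.edgeFinset, f e := by
      rw [← sum_inducedSum_eq G f A hAprop]
      rw [Finset.sum_congr rfl (fun v hv => (hmemA v).mp hv), Finset.sum_const, smul_eq_mul]
    have hsumB : B.card * y = ∑ e ∈ G.edgeFinset, f e := by
      rw [← sum_inducedSum_eq G f B hBprop]
      rw [Finset.sum_congr rfl (fun v hv => (hmemB v).mp hv), Finset.sum_const, smul_eq_mul]
    have hdegA : A.card * r = G.edgeFinset.card := by
      rw [← sum_degree_eq G A hAprop]
      rw [Finset.sum_congr rfl (fun v _ => hreg v), Finset.sum_const, smul_eq_mul]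
    have hdegB : B.card * r = G.edgeFinset.card := by
      rw [← sum_degree_eq G B hBprop]
      rw [Finset.sum_congr rfl (fun v _ => hreg v), Finset.sum_const, smul_eq_mul]
    have hcard : A.card = B.card := by
      have := hdegA.trans hdegB.symm
      exact Nat.eq_of_mul_eq_mul_right hr this
    have hAne : 0 < A.card := by
      have : x ∈ I := by rw [hxyI]; simp
      obtain ⟨v, _, hv⟩ := Finset.mem_image.mp this
      exact Finset.card_pos.mpr ⟨v, (hmemA v).mpr hv⟩
    have := hsumA.trans hsumB.symm
    rw [← hcard] at this
    exact hxy (Nat.eq_of_mul_eq_mul_left hAne this)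

end General

section Construction

/-- chunk assignment: a permutation of `{0, …, d-1}`. -/
def chunk (d i : ℕ) : ℕ := if i % 2 = 0 then i / 2 else d - 1 - i / 2

/-- edge label for the edge between vertex `j` of class `i` and vertex `k` of class `i+1`. -/
def lab (d m i j k : ℕ) : ℕ :=
  chunk d i * m ^ 2 + (if i % 2 = 0 then j + m * k else (m - 1 - k) + m * (m - 1 - j)) + 1

def cls (d : ℕ) {n : ℕ} [NeZero n] (v : ZMod n) : ℕ := v.val % d
def idx (d : ℕ) {n : ℕ} [NeZero n] (v : ZMod n) : ℕ := v.val / d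
def iota (n d i j : ℕ) : ZMod n := ((i + d * j : ℕ) : ZMod n)

def gfun (n d m : ℕ) [NeZero n] (u v : ZMod n) : ℕ :=
  if cls d v = (cls d u + 1) % d ∧ ¬ (cls d u = (cls d v + 1) % d) then
    lab d m (cls d u) (idx d u) (idx d v)
  else if cls d u = (cls d v + 1) % d ∧ ¬ (cls d v = (cls d u + 1) % d) then
    lab d m (cls d v) (idx d v) (idx d u)
  else 0

lemma gfun_symm (n d m : ℕ) [NeZero n] (u v : ZMod n) : gfun n d m u v = gfun n d m v u := by
  unfold gfun
  by_cases h1 : cls d v = (cls d u + 1) % d <;> by_cases h2 : cls d u = (cls d v + 1) % d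
  · rw [if_neg (by tauto), if_neg (by tauto), if_neg (by tauto), if_neg (by tauto)]
  · rw [if_pos ⟨h1, h2⟩, if_neg (by tauto), if_pos ⟨h1, h2⟩]
  · rw [if_neg (by tauto), if_pos ⟨h2, h1⟩, if_pos ⟨h2, h1⟩]
  · rw [if_neg (by tauto), if_neg (by tauto), if_neg (by tauto), if_neg (by tauto)]

def fE (n d m : ℕ) [NeZero n] : Sym2 (ZMod n) → ℕ :=
  Sym2.lift ⟨fun u v => gfun n d m u v, gfun_symm n d m⟩

variable {n d m : ℕ} [NeZero n]

lemma cls_lt (hd : 0 < d) (v : ZMod n) : cls d v < d := Nat.mod_lt _ hd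

lemma idx_lt (hn : n = d * m) (hd : 0 < d) (v : ZMod n) : idx d v < m := by
  have h : v.val < m * d := by
    rw [Nat.mul_comm m d, ← hn]
    exact ZMod.val_lt v
  exact (Nat.div_lt_iff_lt_mul hd).mpr h

lemma val_iota (hn : n = d * m) {i j : ℕ} (hi : i < d) (hj : j < m) :
    (iota n d i j).val = i + d * j := by
  apply ZMod.val_cast_of_lt
  subst hn
  calc i + d * j < d + d * j := by omega
    _ = d * (j + 1) := by ring
    _ ≤ d * m := Nat.mul_le_mul_left _ (by omega)

lemma cls_iota (hn : n = d * m) {i j : ℕ} (hi : i < d) (hj : j < m) :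
    cls d (iota n d i j) = i := by
  unfold cls
  rw [val_iota hn hi hj, Nat.add_mul_mod_self_left, Nat.mod_eq_of_lt hi]

lemma idx_iota (hn : n = d * m) {i j : ℕ} (hi : i < d) (hj : j < m) :
    idx d (iota n d i j) = j := by
  unfold idx
  rw [val_iota hn hi hj, Nat.add_mul_div_left _ _ (show 0 < d by omega),
    Nat.div_eq_of_lt hi, Nat.zero_add]

lemma iota_cls_idx (v : ZMod n) : iota n d (cls d v) (idx d v) = v := by
  unfold iota cls idx
  rw [Nat.mod_add_div]
  exact ZMod.natCast_rightInverse v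

lemma natCast_inj_of_lt {a b : ℕ} (ha : a < d) (hb : b < d) (h : (a : ZMod d) = b) : a = b := by
  haveI : NeZero d := ⟨by omega⟩
  have := congrArg ZMod.val h
  rwa [ZMod.val_cast_of_lt ha, ZMod.val_cast_of_lt hb] at this

lemma mod_two_mul {x : ℕ} (hd : 0 < d) (h : x < 2 * d) :
    x % d = if x < d then x else x - d := by
  split
  · exact Nat.mod_eq_of_lt ‹_›
  · rw [Nat.mod_eq_sub_mod (by omega), Nat.mod_eq_of_lt (by omega)]

lemma pi_eq_cls (hdvd : d ∣ n) (v : ZMod n) :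
    ZMod.castHom hdvd (ZMod d) v = ((cls d v : ℕ) : ZMod d) := by
  conv_lhs => rw [← ZMod.natCast_rightInverse v]
  rw [map_natCast]
  unfold cls
  rw [ZMod.natCast_mod]

lemma adj_iff (hn : n = d * m) (hd4 : 4 ≤ d) (S : Finset (ZMod n))
    (hS : ∀ x : ZMod n, (x ∈ S ∨ -x ∈ S) ↔
      (ZMod.castHom (show d ∣ n from ⟨m, hn⟩) (ZMod d) x = 1 ∨
        ZMod.castHom (show d ∣ n from ⟨m, hn⟩) (ZMod d) x = -1))
    (u v : ZMod n) :
    (circulant n S).Adj u v ↔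
      (cls d v = (cls d u + 1) % d ∨ cls d u = (cls d v + 1) % d) := by
  haveI : NeZero d := ⟨by omega⟩
  set π := ZMod.castHom (show d ∣ n from ⟨m, hn⟩) (ZMod d) with hπ
  have key : (u - v ∈ S ∨ v - u ∈ S) ↔ (π (u - v) = 1 ∨ π (u - v) = -1) := by
    have h := hS (u - v)
    rwa [neg_sub] at h
  have hcu := cls_lt (show 0 < d by omega) u
  have hcv := cls_lt (show 0 < d by omega) v
  have e1 : (π (u - v) = -1) ↔ cls d v = (cls d u + 1) % d := by
    rw [map_sub, pi_eq_cls, pi_eq_cls]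
    constructor
    · intro h
      refine natCast_inj_of_lt hcv (Nat.mod_lt _ (show 0 < d by omega)) ?_
      rw [ZMod.natCast_mod]
      push_cast
      linear_combination -h
    · intro h
      have h2 : ((cls d v : ℕ) : ZMod d) = (((cls d u + 1) % d : ℕ) : ZMod d) := by rw [h]
      rw [ZMod.natCast_mod] at h2
      push_cast at h2
      linear_combination -h2
  have e2 : (π (u - v) = 1) ↔ cls d u = (cls d v + 1) % d := by
    rw [map_sub, pi_eq_cls, pi_eq_cls]
    constructor
    · intro h
      refine natCast_inj_of_lt hcu (Nat.mod_lt _ (show 0 < d by omega)) ?_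
      rw [ZMod.natCast_mod]
      push_cast
      linear_combination h
    · intro h
      have h2 : ((cls d u : ℕ) : ZMod d) = (((cls d v + 1) % d : ℕ) : ZMod d) := by rw [h]
      rw [ZMod.natCast_mod] at h2
      push_cast at h2
      linear_combination h2
  constructor
  · rintro ⟨hne, hmem⟩
    rcases key.mp hmem with h | h
    · exact Or.inr (e2.mp h)
    · exact Or.inl (e1.mp h)
  · intro h
    have hne : u ≠ v := by
      rintro rfl
      rcases h with h | h <;>
      · rw [mod_two_mul (show 0 < d by omega) (by omega)] at h
        split at h <;> omega
    refine ⟨hne, key.mpr ?_⟩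
    rcases h with h | h
    · exact Or.inr (e1.mpr h)
    · exact Or.inl (e2.mpr h)

lemma mod_succ_symm (hd : 2 ≤ d) {a b : ℕ} (ha : a < d) (hb : b < d) :
    a = (b + 1) % d ↔ b = (a + (d - 1)) % d := by
  rw [mod_two_mul (show 0 < d by omega) (show b + 1 < 2 * d by omega),
    mod_two_mul (show 0 < d by omega) (show a + (d - 1) < 2 * d by omega)]
  split <;> split <;> omega

end Construction
section Neighbors
variable {n d m : ℕ} [NeZero n]

/-- The standing hypotheses bundled. -/
structure Setup (n d m : ℕ) [NeZero n] (S : Finset (ZMod n)) : Prop where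
  hn : n = d * m
  hd4 : 4 ≤ d
  hde : d % 2 = 0
  hm : 1 ≤ m
  hS : ∀ x : ZMod n, (x ∈ S ∨ -x ∈ S) ↔
      (ZMod.castHom (show d ∣ n from ⟨m, hn⟩) (ZMod d) x = 1 ∨
        ZMod.castHom (show d ∣ n from ⟨m, hn⟩) (ZMod d) x = -1)

variable {S : Finset (ZMod n)}

lemma Setup.hd0 (h : Setup n d m S) : 0 < d := by have := h.hd4; omega

lemma adj_iff' (h : Setup n d m S) (u v : ZMod n) :
    (circulant n S).Adj u v ↔
      (cls d v = (cls d u + 1) % d ∨ cls d u = (cls d v + 1) % d) := by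
  have hS := h.hS
  exact adj_iff h.hn h.hd4 S h.hS u v

lemma neighborFinset_eq (h : Setup n d m S) (v : ZMod n) :
    (circulant n S).neighborFinset v =
      (range m).image (fun k => iota n d ((cls d v + 1) % d) k) ∪
      (range m).image (fun k => iota n d ((cls d v + (d - 1)) % d) k) := by
  have hd0 := h.hd0
  have hd4 := h.hd4
  ext w
  rw [SimpleGraph.mem_neighborFinset, adj_iff' h]
  have h2 : cls d v = (cls d w + 1) % d ↔ cls d w = (cls d v + (d - 1)) % d :=
    mod_succ_symm (by omega) (cls_lt hd0 v) (cls_lt hd0 w)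
  simp only [Finset.mem_union, Finset.mem_image, Finset.mem_range]
  constructor
  · rintro (hc | hc)
    · exact Or.inl ⟨idx d w, idx_lt h.hn hd0 w, by rw [← hc, iota_cls_idx]⟩
    · exact Or.inr ⟨idx d w, idx_lt h.hn hd0 w, by rw [← h2.mp hc, iota_cls_idx]⟩
  · rintro (⟨k, hk, rfl⟩ | ⟨k, hk, rfl⟩)
    · exact Or.inl (cls_iota h.hn (Nat.mod_lt _ hd0) hk)
    · exact Or.inr (h2.mpr (cls_iota h.hn (Nat.mod_lt _ hd0) hk))

lemma up_ne_dn (h : Setup n d m S) {c : ℕ} (hc : c < d) :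
    (c + 1) % d ≠ (c + (d - 1)) % d := by
  have hd4 := h.hd4
  rw [mod_two_mul (by omega) (by omega), mod_two_mul (by omega) (by omega)]
  split <;> split <;> omega

lemma nb_disjoint (h : Setup n d m S) (v : ZMod n) :
    Disjoint ((range m).image (fun k => iota n d ((cls d v + 1) % d) k))
      ((range m).image (fun k => iota n d ((cls d v + (d - 1)) % d) k)) := by
  have hd0 := h.hd0
  rw [Finset.disjoint_left]
  rintro a ha hb
  obtain ⟨k, hk, rfl⟩ := Finset.mem_image.mp ha
  obtain ⟨k', hk', he⟩ := Finset.mem_image.mp hb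
  rw [Finset.mem_range] at hk hk'
  have h1 : cls d (iota n d ((cls d v + 1) % d) k) = (cls d v + 1) % d :=
    cls_iota h.hn (Nat.mod_lt _ hd0) hk
  have h2 : cls d (iota n d ((cls d v + (d - 1)) % d) k') = (cls d v + (d - 1)) % d :=
    cls_iota h.hn (Nat.mod_lt _ hd0) hk'
  rw [he] at h2
  exact up_ne_dn h (cls_lt hd0 v) (h1.symm.trans h2)

lemma iota_injOn (h : Setup n d m S) {c : ℕ} (hc : c < d) :
    Set.InjOn (fun k => iota n d c k) ↑(range m) := by
  intro a ha b hb hab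
  rw [Finset.mem_coe, Finset.mem_range] at ha hb
  have h1 : idx d (iota n d c a) = a := idx_iota h.hn hc ha
  have h2 : idx d (iota n d c b) = b := idx_iota h.hn hc hb
  rw [show iota n d c a = iota n d c b from hab] at h1
  exact h1.symm.trans h2

lemma degree_eq (h : Setup n d m S) (v : ZMod n) :
    (circulant n S).degree v = 2 * m := by
  have hd0 := h.hd0
  rw [← SimpleGraph.card_neighborFinset_eq_degree, neighborFinset_eq h,
    Finset.card_union_of_disjoint (nb_disjoint h v),
    Finset.card_image_of_injOn (iota_injOn h (Nat.mod_lt _ hd0)),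
    Finset.card_image_of_injOn (iota_injOn h (Nat.mod_lt _ hd0)),
    Finset.card_range]
  ring

lemma no_both (h : Setup n d m S) {a b : ℕ} (ha : a < d) (hb : b < d)
    (h1 : a = (b + 1) % d) (h2 : b = (a + 1) % d) : False := by
  have hd4 := h.hd4
  rw [mod_two_mul (by omega) (by omega)] at h1 h2
  split at h1 <;> split at h2 <;> omega

lemma fE_eval_up (h : Setup n d m S) {v w : ZMod n}
    (hc : cls d w = (cls d v + 1) % d) :
    fE n d m s(v, w) = lab d m (cls d v) (idx d v) (idx d w) := by
  have hd0 := h.hd0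
  have hnot : ¬ (cls d v = (cls d w + 1) % d) := fun h2 =>
    no_both h (cls_lt hd0 w) (cls_lt hd0 v) hc h2
  show gfun n d m v w = _
  unfold gfun
  rw [if_pos ⟨hc, hnot⟩]

lemma fE_eval_dn (h : Setup n d m S) {v w : ZMod n}
    (hc : cls d v = (cls d w + 1) % d) :
    fE n d m s(v, w) = lab d m (cls d w) (idx d w) (idx d v) := by
  have hd0 := h.hd0
  have hnot : ¬ (cls d w = (cls d v + 1) % d) := fun h2 =>
    no_both h (cls_lt hd0 w) (cls_lt hd0 v) h2 hc
  show gfun n d m v w = _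
  unfold gfun
  rw [if_neg (by tauto), if_pos ⟨hc, hnot⟩]

/-- description of `(i + (d-1)) % d` for `i < d`. -/
lemma dn_eval (hd : 2 ≤ d) {i : ℕ} (hi : i < d) :
    (i + (d - 1)) % d = if i = 0 then d - 1 else i - 1 := by
  rw [mod_two_mul (by omega) (by omega)]
  split <;> split <;> omega

lemma up_eval (hd : 2 ≤ d) {i : ℕ} (hi : i < d) :
    (i + 1) % d = if i = d - 1 then 0 else i + 1 := by
  rw [mod_two_mul (by omega) (by omega)]
  split <;> split <;> omega

lemma up_dn (hd : 2 ≤ d) {i : ℕ} (hi : i < d) :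
    ((i + (d - 1)) % d + 1) % d = i := by
  rw [dn_eval hd hi]
  split
  · rw [mod_two_mul (by omega) (by omega)]
    split <;> omega
  · rw [mod_two_mul (by omega) (by omega)]
    split <;> omega

end Neighbors
section Sums
variable {n d m : ℕ} [NeZero n] {S : Finset (ZMod n)}

lemma inducedSum_eval (h : Setup n d m S) (i j : ℕ) (hi : i < d) (hj : j < m) :
    inducedSum (circulant n S) (fE n d m) (iota n d i j) =
      m ^ 3 * (chunk d ((i + (d - 1)) % d) + chunk d i)
        + (m ^ 2 * (m - 1) + m * (m - 1) + 2 * m) := by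
  have hd0 := h.hd0
  have hd4 := h.hd4
  have hde := h.hde
  have hm := h.hm
  set p := (i + (d - 1)) % d with hpdef
  have hp : p < d := Nat.mod_lt _ hd0
  have hpup : (p + 1) % d = i := up_dn (by omega) hi
  have hpar : p % 2 + i % 2 = 1 := by
    have hdn := dn_eval (show 2 ≤ d by omega) hi
    rw [← hpdef] at hdn
    split at hdn <;> omega
  set v := iota n d i j with hvdef
  have hcv : cls d v = i := cls_iota h.hn hi hj
  have hiv : idx d v = j := idx_iota h.hn hi hj
  rw [inducedSum_eq_sum_neighbors, neighborFinset_eq h v, hcv, ← hpdef]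
  have hdisj : Disjoint ((range m).image (fun k => iota n d ((i + 1) % d) k))
      ((range m).image (fun k => iota n d p k)) := by
    rw [hpdef, ← hcv]
    exact nb_disjoint h v
  rw [Finset.sum_union hdisj]
  rw [Finset.sum_image (fun a ha b hb hab => iota_injOn h (Nat.mod_lt _ hd0) ha hb hab),
    Finset.sum_image (fun a ha b hb hab => iota_injOn h hp ha hb hab)]
  have e1 : ∀ k ∈ range m, fE n d m s(v, iota n d ((i + 1) % d) k) = lab d m i j k := by
    intro k hk
    rw [Finset.mem_range] at hk
    have hcw : cls d (iota n d ((i + 1) % d) k) = (i + 1) % d :=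
      cls_iota h.hn (Nat.mod_lt _ hd0) hk
    have hiw : idx d (iota n d ((i + 1) % d) k) = k :=
      idx_iota h.hn (Nat.mod_lt _ hd0) hk
    rw [fE_eval_up h (by rw [hcw, hcv]), hcv, hiv, hiw]
  have e2 : ∀ k ∈ range m, fE n d m s(v, iota n d p k) = lab d m p k j := by
    intro k hk
    rw [Finset.mem_range] at hk
    have hcw : cls d (iota n d p k) = p := cls_iota h.hn hp hk
    have hiw : idx d (iota n d p k) = k := idx_iota h.hn hp hk
    rw [fE_eval_dn h (by rw [hcw, hcv, hpup]), hcw, hiv, hiw]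
  rw [Finset.sum_congr rfl e1, Finset.sum_congr rfl e2]
  have hT := Finset.sum_range_id_mul_two m
  have hjw : j + (m - 1 - j) = m - 1 := by omega
  rcases Nat.even_or_odd i with hie | hio
  · have hie' : i % 2 = 0 := Nat.even_iff.mp hie
    have hpo : ¬ (p % 2 = 0) := by omega
    have s1 : ∑ k ∈ range m, lab d m i j k
        = m * (chunk d i * m ^ 2 + j + 1) + m * (∑ k ∈ range m, k) := by
      calc ∑ k ∈ range m, lab d m i j k
          = ∑ k ∈ range m, ((chunk d i * m ^ 2 + j + 1) + m * k) :=
            Finset.sum_congr rfl fun k _ => by simp only [lab, hie', reduceIte]; ring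
        _ = _ := by
            rw [Finset.sum_add_distrib, Finset.sum_const, Finset.card_range, smul_eq_mul,
              ← Finset.mul_sum]
    have s2 : ∑ k ∈ range m, lab d m p k j
        = m * (chunk d p * m ^ 2 + (m - 1 - j) + 1) + m * (∑ k ∈ range m, k) := by
      calc ∑ k ∈ range m, lab d m p k j
          = ∑ k ∈ range m, ((chunk d p * m ^ 2 + (m - 1 - j) + 1) + m * (m - 1 - k)) :=
            Finset.sum_congr rfl fun k _ => by simp only [lab, if_neg hpo]; ring
        _ = (∑ _k ∈ range m, (chunk d p * m ^ 2 + (m - 1 - j) + 1))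
              + ∑ k ∈ range m, m * (m - 1 - k) := Finset.sum_add_distrib
        _ = _ := by
            rw [Finset.sum_const, Finset.card_range, smul_eq_mul, ← Finset.mul_sum,
              Finset.sum_range_reflect (fun x => x) m]
    rw [s1, s2]
    set T := ∑ k ∈ range m, k
    set w := m - 1 - j
    set m1 := m - 1
    zify
    zify at hjw hT
    linear_combination (m : ℤ) * hjw + (m : ℤ) * hT
  · have hio' : ¬ (i % 2 = 0) := by
      have := Nat.odd_iff.mp hio
      omega
    have hpe : p % 2 = 0 := by
      have := Nat.odd_iff.mp hio
      omega
    have s1 : ∑ k ∈ range m, lab d m i j k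
        = m * (chunk d i * m ^ 2 + m * (m - 1 - j) + 1) + (∑ k ∈ range m, k) := by
      calc ∑ k ∈ range m, lab d m i j k
          = ∑ k ∈ range m, ((chunk d i * m ^ 2 + m * (m - 1 - j) + 1) + (m - 1 - k)) :=
            Finset.sum_congr rfl fun k _ => by simp only [lab, if_neg hio']; ring
        _ = (∑ _k ∈ range m, (chunk d i * m ^ 2 + m * (m - 1 - j) + 1))
              + ∑ k ∈ range m, (m - 1 - k) := Finset.sum_add_distrib
        _ = _ := by
            rw [Finset.sum_const, Finset.card_range, smul_eq_mul,
              Finset.sum_range_reflect (fun x => x) m]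
    have s2 : ∑ k ∈ range m, lab d m p k j
        = m * (chunk d p * m ^ 2 + m * j + 1) + (∑ k ∈ range m, k) := by
      calc ∑ k ∈ range m, lab d m p k j
          = ∑ k ∈ range m, ((chunk d p * m ^ 2 + m * j + 1) + k) :=
            Finset.sum_congr rfl fun k _ => by simp only [lab, hpe, reduceIte]; ring
        _ = _ := by
            rw [Finset.sum_add_distrib, Finset.sum_const, Finset.card_range, smul_eq_mul]
    rw [s1, s2]
    set T := ∑ k ∈ range m, k
    set w := m - 1 - j
    set m1 := m - 1
    zify
    zify at hjw hT
    linear_combination (m : ℤ) ^ 2 * hjw + hT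

lemma chunkpair_eval (hd4 : 4 ≤ d) (hde : d % 2 = 0) {i : ℕ} (hi : i < d) :
    chunk d ((i + (d - 1)) % d) + chunk d i =
      if i = 0 then d / 2 else if i % 2 = 1 then d - 1 else d := by
  rw [dn_eval (by omega) hi]
  unfold chunk
  split_ifs <;> omega

lemma inducedSum_val (h : Setup n d m S) (v : ZMod n) :
    inducedSum (circulant n S) (fE n d m) v =
      m ^ 3 * (chunk d ((cls d v + (d - 1)) % d) + chunk d (cls d v))
        + (m ^ 2 * (m - 1) + m * (m - 1) + 2 * m) := by
  conv_lhs => rw [← iota_cls_idx (n := n) (d := d) v]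
  exact inducedSum_eval h _ _ (cls_lt h.hd0 v) (idx_lt h.hn h.hd0 v)

end Sums
section Bijection
variable {n d m : ℕ} [NeZero n] {S : Finset (ZMod n)}

lemma colorCount_eq (h : Setup n d m S) :
    colorCount (circulant n S) (fE n d m) = 3 := by
  have hd4 := h.hd4
  have hde := h.hde
  have hm := h.hm
  have hd0 := h.hd0
  set K := m ^ 2 * (m - 1) + m * (m - 1) + 2 * m with hK
  have himg : Finset.image (inducedSum (circulant n S) (fE n d m)) Finset.univ
      = {m ^ 3 * (d / 2) + K, m ^ 3 * (d - 1) + K, m ^ 3 * d + K} := by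
    ext x
    simp only [Finset.mem_image, Finset.mem_univ, true_and, Finset.mem_insert,
      Finset.mem_singleton]
    constructor
    · rintro ⟨v, rfl⟩
      rw [inducedSum_val h v, chunkpair_eval hd4 hde (cls_lt hd0 v)]
      split_ifs
      · exact Or.inl rfl
      · exact Or.inr (Or.inl rfl)
      · exact Or.inr (Or.inr rfl)
    · rintro (rfl | rfl | rfl)
      · refine ⟨iota n d 0 0, ?_⟩
        rw [inducedSum_val h _, cls_iota h.hn (by omega) (by omega),
          chunkpair_eval hd4 hde (show (0:ℕ) < d by omega), if_pos rfl]
      · refine ⟨iota n d 1 0, ?_⟩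
        rw [inducedSum_val h _, cls_iota h.hn (by omega) (by omega),
          chunkpair_eval hd4 hde (show (1:ℕ) < d by omega)]
        norm_num
        exact hK.symm
      · refine ⟨iota n d 2 0, ?_⟩
        rw [inducedSum_val h _, cls_iota h.hn (by omega) (by omega),
          chunkpair_eval hd4 hde (show (2:ℕ) < d by omega)]
        norm_num
        exact hK.symm
  rw [colorCount, himg]
  have hmp : 0 < m ^ 3 := by positivity
  set A := m ^ 3 * (d / 2) with hA
  set B := m ^ 3 * (d - 1) with hB
  set C := m ^ 3 * d with hC
  have hAB : A < B := mul_lt_mul_of_pos_left (by omega) hmp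
  have hBC : B < C := mul_lt_mul_of_pos_left (by omega) hmp
  rw [Finset.card_insert_of_notMem (by
      simp only [Finset.mem_insert, Finset.mem_singleton]
      push_neg
      omega),
    Finset.card_insert_of_notMem (by
      simp only [Finset.mem_singleton]
      omega),
    Finset.card_singleton]

lemma sums_ne (h : Setup n d m S) {u v : ZMod n} (huv : (circulant n S).Adj u v) :
    inducedSum (circulant n S) (fE n d m) u ≠ inducedSum (circulant n S) (fE n d m) v := by
  have hd4 := h.hd4
  have hde := h.hde
  have hm := h.hm
  have hd0 := h.hd0
  have hcu := cls_lt hd0 u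
  have hcv := cls_lt hd0 v
  rw [inducedSum_val h u, inducedSum_val h v]
  intro heq
  have hmp : 0 < m ^ 3 := by positivity
  have h2 : chunk d ((cls d u + (d - 1)) % d) + chunk d (cls d u)
      = chunk d ((cls d v + (d - 1)) % d) + chunk d (cls d v) :=
    Nat.eq_of_mul_eq_mul_left hmp (Nat.add_right_cancel heq)
  rw [chunkpair_eval hd4 hde hcu, chunkpair_eval hd4 hde hcv] at h2
  rcases (adj_iff' h u v).mp huv with hc | hc
  · rw [up_eval (by omega) hcu] at hc
    split at hc <;> split_ifs at h2 <;> omega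
  · rw [up_eval (by omega) hcv] at hc
    split at hc <;> split_ifs at h2 <;> omega

lemma edge_decomp (h : Setup n d m S) {e : Sym2 (ZMod n)}
    (he : e ∈ (circulant n S).edgeFinset) :
    ∃ i j k, i < d ∧ j < m ∧ k < m ∧ e = s(iota n d i j, iota n d ((i + 1) % d) k) := by
  induction e with
  | _ a b =>
    rw [SimpleGraph.mem_edgeFinset] at he
    have hadj : (circulant n S).Adj a b := ((circulant n S).mem_edgeSet).mp he
    rcases (adj_iff' h a b).mp hadj with hc | hc
    · refine ⟨cls d a, idx d a, idx d b, cls_lt h.hd0 a, idx_lt h.hn h.hd0 a,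
        idx_lt h.hn h.hd0 b, ?_⟩
      rw [← hc, iota_cls_idx, iota_cls_idx]
    · refine ⟨cls d b, idx d b, idx d a, cls_lt h.hd0 b, idx_lt h.hn h.hd0 b,
        idx_lt h.hn h.hd0 a, ?_⟩
      rw [← hc, iota_cls_idx, iota_cls_idx]
      exact Sym2.eq_swap

lemma fE_decomp_eval (h : Setup n d m S) {i j k : ℕ} (hi : i < d) (hj : j < m) (hk : k < m) :
    fE n d m s(iota n d i j, iota n d ((i + 1) % d) k) = lab d m i j k := by
  have h1 : cls d (iota n d ((i + 1) % d) k) = (i + 1) % d :=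
    cls_iota h.hn (Nat.mod_lt _ h.hd0) hk
  have h2 : cls d (iota n d i j) = i := cls_iota h.hn hi hj
  rw [fE_eval_up h (by rw [h1, h2]), h2, idx_iota h.hn hi hj,
    idx_iota h.hn (Nat.mod_lt _ h.hd0) hk]

lemma lab_pos (d m i j k : ℕ) : 1 ≤ lab d m i j k := by
  unfold lab
  exact Nat.succ_le_succ (Nat.zero_le _)

lemma inner_lt (hm : 1 ≤ m) {j k : ℕ} (hj : j < m) (hk : k < m) (i : ℕ) :
    (if i % 2 = 0 then j + m * k else (m - 1 - k) + m * (m - 1 - j)) < m ^ 2 := by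
  have hmm : m * m = m ^ 2 := (pow_two m).symm
  split
  · calc j + m * k < m + m * k := Nat.add_lt_add_right hj _
      _ = m * k + m := Nat.add_comm _ _
      _ ≤ m * m := by
          have hk1 : k + 1 ≤ m := hk
          calc m * k + m = m * (k + 1) := by ring
            _ ≤ m * m := Nat.mul_le_mul_left _ hk1
      _ = m ^ 2 := hmm
  · calc (m - 1 - k) + m * (m - 1 - j) < m + m * (m - 1 - j) :=
        Nat.add_lt_add_right (by omega) _
      _ = m * (m - 1 - j) + m := Nat.add_comm _ _
      _ ≤ m * m := by
          have hj1 : (m - 1 - j) + 1 ≤ m := by omega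
          calc m * (m - 1 - j) + m = m * ((m - 1 - j) + 1) := by ring
            _ ≤ m * m := Nat.mul_le_mul_left _ hj1
      _ = m ^ 2 := hmm

lemma chunk_lt (hd0 : 0 < d) {i : ℕ} (hi : i < d) : chunk d i < d := by
  unfold chunk
  split <;> omega

lemma lab_le (hd0 : 0 < d) (hm : 1 ≤ m) {i j k : ℕ} (hi : i < d) (hj : j < m) (hk : k < m) :
    lab d m i j k ≤ d * m ^ 2 := by
  unfold lab
  set w := (if i % 2 = 0 then j + m * k else (m - 1 - k) + m * (m - 1 - j)) with hw
  have h1 : w < m ^ 2 := by rw [hw]; exact inner_lt hm hj hk i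
  have h2 : chunk d i + 1 ≤ d := Nat.succ_le_of_lt (chunk_lt hd0 hi)
  rw [Nat.add_assoc]
  calc chunk d i * m ^ 2 + (w + 1) ≤ chunk d i * m ^ 2 + m ^ 2 :=
      Nat.add_le_add_left (Nat.succ_le_of_lt h1) _
    _ = (chunk d i + 1) * m ^ 2 := by ring
    _ ≤ d * m ^ 2 := Nat.mul_le_mul_right _ h2

lemma dec_add (q a b a' b' : ℕ) (ha : a < q) (ha' : a' < q)
    (heq : a + q * b = a' + q * b') : a = a' ∧ b = b' := by
  have h1 : (a + q * b) % q = (a' + q * b') % q := by rw [heq]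
  rw [Nat.add_mul_mod_self_left, Nat.add_mul_mod_self_left,
    Nat.mod_eq_of_lt ha, Nat.mod_eq_of_lt ha'] at h1
  subst h1
  refine ⟨rfl, ?_⟩
  have h2 : q * b = q * b' := Nat.add_left_cancel heq
  exact Nat.eq_of_mul_eq_mul_left (by omega) h2

lemma lab_inj (hde : d % 2 = 0) (hm : 1 ≤ m) {i j k i' j' k' : ℕ}
    (hi : i < d) (hj : j < m) (hk : k < m) (hi' : i' < d) (hj' : j' < m) (hk' : k' < m)
    (heq : lab d m i j k = lab d m i' j' k') : i = i' ∧ j = j' ∧ k = k' := by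
  unfold lab at heq
  set w := (if i % 2 = 0 then j + m * k else (m - 1 - k) + m * (m - 1 - j)) with hw
  set w' := (if i' % 2 = 0 then j' + m * k' else (m - 1 - k') + m * (m - 1 - j')) with hw'
  have hwlt : w < m ^ 2 := by rw [hw]; exact inner_lt hm hj hk i
  have hwlt' : w' < m ^ 2 := by rw [hw']; exact inner_lt hm hj' hk' i'
  have h3 : chunk d i * m ^ 2 + w = chunk d i' * m ^ 2 + w' := Nat.add_right_cancel heq
  have heq2 : w + m ^ 2 * chunk d i = w' + m ^ 2 * chunk d i' := by
    calc w + m ^ 2 * chunk d i = chunk d i * m ^ 2 + w := by ring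
      _ = chunk d i' * m ^ 2 + w' := h3
      _ = w' + m ^ 2 * chunk d i' := by ring
  obtain ⟨hww, hcc⟩ := dec_add (m ^ 2) _ _ _ _ hwlt hwlt' heq2
  have hii : i = i' := by
    unfold chunk at hcc
    split_ifs at hcc <;> omega
  subst hii
  rw [hw, hw'] at hww
  by_cases hp : i % 2 = 0
  · rw [if_pos hp, if_pos hp] at hww
    obtain ⟨h4, h5⟩ := dec_add m j k j' k' hj hj' hww
    exact ⟨rfl, h4, h5⟩
  · rw [if_neg hp, if_neg hp] at hww
    obtain ⟨h4, h5⟩ := dec_add m _ _ _ _ (by omega) (by omega) hww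
    exact ⟨rfl, by omega, by omega⟩

lemma edgecard (h : Setup n d m S) : (circulant n S).edgeFinset.card = d * m ^ 2 := by
  have hhs := SimpleGraph.sum_degrees_eq_twice_card_edges (circulant n S)
  rw [Finset.sum_congr rfl (fun v _ => degree_eq h v), Finset.sum_const, Finset.card_univ,
    ZMod.card n, smul_eq_mul] at hhs
  have h2 : n * (2 * m) = 2 * (d * m ^ 2) := by rw [h.hn]; ring
  have h3 : 2 * (d * m ^ 2) = 2 * (circulant n S).edgeFinset.card := by rw [← h2]; exact hhs
  exact (Nat.eq_of_mul_eq_mul_left (by omega) h3).symm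

lemma fE_bijOn (h : Setup n d m S) :
    Set.BijOn (fE n d m) (circulant n S).edgeSet
      (Set.Icc 1 (circulant n S).edgeFinset.card) := by
  have hq := edgecard h
  rw [hq, ← SimpleGraph.coe_edgeFinset, ← Finset.coe_Icc]
  have hmapsF : ∀ e ∈ (circulant n S).edgeFinset, fE n d m e ∈ Finset.Icc 1 (d * m ^ 2) := by
    intro e he
    obtain ⟨i, j, k, hi, hj, hk, rfl⟩ := edge_decomp h he
    rw [fE_decomp_eval h hi hj hk, Finset.mem_Icc]
    exact ⟨lab_pos _ _ _ _ _, lab_le h.hd0 h.hm hi hj hk⟩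
  have hinj : Set.InjOn (fE n d m) ↑(circulant n S).edgeFinset := by
    intro e he e' he' hfe
    rw [Finset.mem_coe] at he he'
    obtain ⟨i, j, k, hi, hj, hk, rfl⟩ := edge_decomp h he
    obtain ⟨i', j', k', hi', hj', hk', rfl⟩ := edge_decomp h he'
    rw [fE_decomp_eval h hi hj hk, fE_decomp_eval h hi' hj' hk'] at hfe
    obtain ⟨rfl, rfl, rfl⟩ := lab_inj h.hde h.hm hi hj hk hi' hj' hk' hfe
    rfl
  have himg : Finset.image (fE n d m) (circulant n S).edgeFinset = Finset.Icc 1 (d * m ^ 2) := by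
    apply Finset.eq_of_subset_of_card_le
    · intro x hx
      obtain ⟨e, he, rfl⟩ := Finset.mem_image.mp hx
      exact hmapsF e he
    · rw [Finset.card_image_of_injOn hinj, hq, Nat.card_Icc]
      simp
  refine ⟨?_, hinj, ?_⟩
  · intro e he
    rw [Finset.mem_coe] at he ⊢
    exact hmapsF e he
  · intro x hx
    rw [← himg, Finset.coe_image] at hx
    exact hx

theorem chiLA_eq_three (h : Setup n d m S) : chiLA (circulant n S) = 3 := by
  have hloc : IsLocalAntimagic (circulant n S) (fE n d m) :=
    ⟨fE_bijOn h, fun u v huv => sums_ne h huv⟩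
  apply le_antisymm
  · apply sInf_le
    refine ⟨fE n d m, hloc, ?_⟩
    rw [colorCount_eq h]
    norm_cast
  · apply le_sInf
    rintro x ⟨f, hf, rfl⟩
    have hd4 := h.hd4
    have hm := h.hm
    have hedge : (circulant n S).Adj (iota n d 0 0) (iota n d 1 0) := by
      rw [adj_iff' h]
      left
      rw [cls_iota h.hn (by omega) (by omega), cls_iota h.hn (by omega) (by omega)]
      rw [Nat.mod_eq_of_lt (by omega)]
    have h3 := three_le_colorCount (circulant n S) (2 * m) (by omega) (degree_eq h) hedge hf
    exact_mod_cast h3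

end Bijection
section Concrete

theorem concreteS (n t e : ℕ) [NeZero n] (hn0 : n = (2 * t + 4) * 2 ^ (e + 1)) :
    chiLA (circulant n
      (Finset.image (fun r => ((1 + r * (2 * t + 4) : ℕ) : ZMod n)) (Finset.range (2 ^ e)) ∪
       Finset.image (fun r => ((2 * t + 3 + r * (2 * t + 4) : ℕ) : ZMod n))
         (Finset.range (2 ^ e)))) = 3 := by
  set d := 2 * t + 4 with hddef
  set m := 2 ^ (e + 1) with hmdef
  set S₀ := (Finset.image (fun r => ((1 + r * d : ℕ) : ZMod n)) (Finset.range (2 ^ e)) ∪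
       Finset.image (fun r => ((2 * t + 3 + r * d : ℕ) : ZMod n)) (Finset.range (2 ^ e)))
    with hSdef
  have hn' : n = d * m := hn0
  have hd4 : 4 ≤ d := by omega
  have hde : d % 2 = 0 := by omega
  have hm1 : 1 ≤ m := by
    rw [hmdef]
    exact pow_pos (by norm_num : (0:ℕ) < 2) (e + 1)
  have hd0 : (0:ℕ) < d := by omega
  have hdz : (d : ℤ) = 2 * (t : ℤ) + 4 := by exact_mod_cast congrArg (Nat.cast (R := ℤ)) hddef
  have hme : m = 2 * 2 ^ e := by rw [hmdef, pow_succ]; ring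
  have claimA : ∀ y ∈ S₀,
      ZMod.castHom (show d ∣ n from ⟨m, hn'⟩) (ZMod d) y = 1 ∨
      ZMod.castHom (show d ∣ n from ⟨m, hn'⟩) (ZMod d) y = -1 := by
    intro y hy
    rw [hSdef, Finset.mem_union] at hy
    rcases hy with hy | hy <;> obtain ⟨r, hr, rfl⟩ := Finset.mem_image.mp hy
    · left
      rw [map_natCast, Nat.cast_add, Nat.cast_one, Nat.cast_mul, ZMod.natCast_self,
        mul_zero, add_zero]
    · right
      rw [map_natCast]
      have h1 : ((2 * t + 3 + r * d : ℕ) : ZMod d) + 1 = 0 := by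
        rw [show ((2 * t + 3 + r * d : ℕ) : ZMod d) + 1
            = (((2 * t + 3 + r * d) + 1 : ℕ) : ZMod d) from by push_cast; ring]
        rw [show (2 * t + 3 + r * d) + 1 = (r + 1) * d from by rw [hddef]; ring]
        rw [Nat.cast_mul, ZMod.natCast_self, mul_zero]
      exact eq_neg_of_add_eq_zero_left h1
  have claimB : ∀ x : ZMod n,
      ZMod.castHom (show d ∣ n from ⟨m, hn'⟩) (ZMod d) x = 1 → x ∈ S₀ ∨ -x ∈ S₀ := by
    intro x hx
    have hcls : cls d x = 1 := by
      have hp := pi_eq_cls (show d ∣ n from ⟨m, hn'⟩) x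
      rw [hx] at hp
      refine (natCast_inj_of_lt (cls_lt hd0 x) (show 1 < d by omega) ?_).symm.symm
      · rw [← hp]
        norm_cast
    have hval1 : x.val % d = 1 := hcls
    have hrm : x.val / d < m := idx_lt hn' hd0 x
    have hxval : x.val = 1 + d * (x.val / d) := by
      calc x.val = x.val % d + d * (x.val / d) := (Nat.mod_add_div _ _).symm
        _ = 1 + d * (x.val / d) := by rw [hval1]
    by_cases hr2 : x.val / d < 2 ^ e
    · left
      rw [hSdef]
      refine Finset.mem_union_left _
        (Finset.mem_image.mpr ⟨x.val / d, Finset.mem_range.mpr hr2, ?_⟩)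
      show ((1 + (x.val / d) * d : ℕ) : ZMod n) = x
      rw [show 1 + (x.val / d) * d = x.val from by rw [Nat.mul_comm]; exact hxval.symm]
      exact ZMod.natCast_rightInverse x
    · right
      rw [hSdef]
      refine Finset.mem_union_right _
        (Finset.mem_image.mpr ⟨m - 1 - x.val / d, Finset.mem_range.mpr (by omega), ?_⟩)
      show ((2 * t + 3 + (m - 1 - x.val / d) * d : ℕ) : ZMod n) = -x
      have harith : (2 * t + 3 + (m - 1 - x.val / d) * d) + x.val = d * m := by
        obtain ⟨w, hw1, hw2⟩ : ∃ w, m - 1 - x.val / d = w ∧ w + x.val / d = m - 1 :=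
          ⟨_, rfl, by omega⟩
        obtain ⟨r, hr⟩ : ∃ r, x.val / d = r := ⟨_, rfl⟩
        rw [hw1, hxval, hr, hddef]
        rw [hr] at hw2
        have hw2' : (w : ℤ) + r = (m : ℤ) - 1 := by
          have h1m : 1 ≤ m := hm1
          zify [h1m] at hw2
          exact hw2
        zify
        linear_combination (2 * (t : ℤ) + 4) * hw2'
      have hzero : ((2 * t + 3 + (m - 1 - x.val / d) * d : ℕ) : ZMod n)
          + ((x.val : ℕ) : ZMod n) = 0 := by
        rw [← Nat.cast_add, harith, ← hn']
        exact ZMod.natCast_self n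
      rw [ZMod.natCast_rightInverse x] at hzero
      exact eq_neg_of_add_eq_zero_left hzero
  have hS : ∀ x : ZMod n, (x ∈ S₀ ∨ -x ∈ S₀) ↔
      (ZMod.castHom (show d ∣ n from ⟨m, hn'⟩) (ZMod d) x = 1 ∨
        ZMod.castHom (show d ∣ n from ⟨m, hn'⟩) (ZMod d) x = -1) := by
    intro x
    constructor
    · rintro (hx | hx)
      · exact claimA x hx
      · rcases claimA (-x) hx with h1 | h1
        · right
          rw [map_neg] at h1
          linear_combination -h1
        · left
          rw [map_neg] at h1
          linear_combination -h1
    · rintro (hx | hx)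
      · exact claimB x hx
      · have h2 : ZMod.castHom (show d ∣ n from ⟨m, hn'⟩) (ZMod d) (-x) = 1 := by
          rw [map_neg, hx]
          ring
        rcases claimB (-x) h2 with h3 | h3
        · exact Or.inr h3
        · left
          rwa [neg_neg] at h3
  exact chiLA_eq_three ⟨hn', hd4, hde, hm1, hS⟩

end Concrete

end Stmt17Aux

open LocalAntimagic in
/-- for `s ≥ 2`, `t ≥ 0`,
`χ_la(C_{2^s(t+2)}(1, 2t+3, …, 1+(2^{s−2}−1)(2t+4), 2t+3+(2^{s−2}−1)(2t+4))) = 3`. -/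
theorem stmt17 (s t : ℕ) (hs : 2 ≤ s) :
    chiLA (circulant (2 ^ s * (t + 2))
      (Finset.image (fun r => ((1 + r * (2 * t + 4) : ℕ) : ZMod (2 ^ s * (t + 2))))
          (Finset.range (2 ^ (s - 2))) ∪
       Finset.image (fun r => ((2 * t + 3 + r * (2 * t + 4) : ℕ) : ZMod (2 ^ s * (t + 2))))
          (Finset.range (2 ^ (s - 2))))) = 3 := by
  obtain ⟨e, rfl⟩ : ∃ e, s = e + 2 := ⟨s - 2, by omega⟩
  rw [show e + 2 - 2 = e from by omega]
  exact Stmt17Aux.concreteS (2 ^ (e + 2) * (t + 2)) t e (by ring)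
end

section
/- A graph G of size q has χ_la(G) = 2 if and only if G is bipartite with bipartition (V₁, V₂) such that (i) G has at most one pendant vertex, and (ii) G admits a local antimagic labeling in which every vertex of V₁ has induced label (q(q+1)/2)/|V₁| and every vertex of V₂ has induced label (q(q+1)/2)/|V₂|, and these two quantities are distinct integers. -/
open Finset

section Helpers

open Finset
namespace LocalAntimagic

variable {V : Type*} [Fintype V] [DecidableEq V]

/-- A connected graph has at least |V| - 1 edges. -/
lemma card_le_edges (G : SimpleGraph V) [DecidableRel G.Adj] (hconn : G.Connected) :
    Fintype.card V ≤ G.edgeFinset.card + 1 := by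
  obtain ⟨r⟩ := hconn.nonempty
  have H : ∀ v : V, ∃ w, v ≠ r → G.Adj v w ∧ G.dist w r < G.dist v r := by
    intro v
    by_cases hv : v = r
    · exact ⟨r, fun h => absurd hv h⟩
    · obtain ⟨p, hp⟩ := (hconn v r).exists_walk_length_eq_dist
      cases p with
      | nil => exact absurd rfl hv
      | cons h q =>
        rename_i w
        refine ⟨w, fun _ => ⟨h, ?_⟩⟩
        have h1 : G.dist w r ≤ q.length := SimpleGraph.dist_le q
        simp only [SimpleGraph.Walk.length_cons] at hp
        omega
  choose g hg using H
  have hinj : Set.InjOn (fun v => s(v, g v)) (univ.erase r : Finset V) := by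
    intro v₁ h₁ v₂ h₂ he
    simp only [Finset.coe_erase, Set.mem_diff, Set.mem_singleton_iff] at h₁ h₂
    by_contra hne'
    have h₁' := hg v₁ h₁.2
    have h₂' := hg v₂ h₂.2
    simp only [Sym2.eq, Sym2.rel_iff', Prod.mk.injEq, Prod.swap_prod_mk] at he
    rcases he with ⟨ha, hb⟩ | ⟨ha, hb⟩
    · exact hne' ha
    · rw [← ha] at h₂'
      rw [hb] at h₁'
      omega
  have hmaps : ∀ v ∈ (univ.erase r : Finset V), s(v, g v) ∈ G.edgeFinset := by
    intro v hv
    rw [Finset.mem_erase] at hv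
    rw [SimpleGraph.mem_edgeFinset, SimpleGraph.mem_edgeSet]
    exact (hg v hv.1).1
  haveI : Nonempty V := ⟨r⟩
  have := Finset.card_le_card_of_injOn _ hmaps hinj
  have hcard : (univ.erase r : Finset V).card = Fintype.card V - 1 := by
    rw [Finset.card_erase_of_mem (Finset.mem_univ r), Finset.card_univ]
  have : 1 ≤ Fintype.card V := Fintype.card_pos
  omega

/-- Sum of induced sums over a part that meets every edge exactly once. -/
lemma sum_part (G : SimpleGraph V) [DecidableRel G.Adj] (f : Sym2 V → ℕ) (S : Finset V)
    (h : ∀ e ∈ G.edgeFinset, (S.filter (fun v => v ∈ e)).card = 1) :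
    ∑ v ∈ S, inducedSum G f v = ∑ e ∈ G.edgeFinset, f e := by
  unfold inducedSum
  have : ∀ v, G.incidenceFinset v = G.edgeFinset.filter (fun e => v ∈ e) :=
    fun v => SimpleGraph.incidenceFinset_eq_filter G v
  simp_rw [this, Finset.sum_filter]
  rw [Finset.sum_comm]
  refine Finset.sum_congr rfl fun e he => ?_
  rw [← Finset.sum_filter, Finset.sum_const, h e he, one_smul]

/-- The sum of labels equals q(q+1)/2 (doubled version). -/
lemma sum_labels (G : SimpleGraph V) [DecidableRel G.Adj] (f : Sym2 V → ℕ)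
    (hf : Set.BijOn f G.edgeSet (Set.Icc 1 G.edgeFinset.card)) :
    (∑ e ∈ G.edgeFinset, f e) * 2 = G.edgeFinset.card * (G.edgeFinset.card + 1) := by
  have h1 : ∑ e ∈ G.edgeFinset, f e = ∑ i ∈ Finset.Icc 1 G.edgeFinset.card, i := by
    apply Finset.sum_nbij (i := f)
    · intro a ha
      rw [SimpleGraph.mem_edgeFinset] at ha
      have := hf.mapsTo ha
      rw [Finset.mem_Icc]
      exact ⟨this.1, this.2⟩
    · intro a ha b hb hab
      rw [Finset.mem_coe, SimpleGraph.mem_edgeFinset] at ha hb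
      exact hf.injOn ha hb hab
    · intro n hn
      rw [Finset.coe_Icc] at hn
      obtain ⟨e, he, hfe⟩ := hf.surjOn hn
      exact ⟨e, by rwa [Finset.mem_coe, SimpleGraph.mem_edgeFinset], hfe⟩
    · intros; rfl
  rw [h1]
  have h2 : Finset.range (G.edgeFinset.card + 1) = insert 0 (Finset.Icc 1 G.edgeFinset.card) := by
    ext i
    simp [Finset.mem_Icc, Nat.lt_succ_iff]
    omega
  have h3 := Finset.sum_range_id_mul_two (G.edgeFinset.card + 1)
  rw [h2, Finset.sum_insert (by simp)] at h3
  rw [Nat.mul_comm (#G.edgeFinset + 1)] at h3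
  simpa using h3

/-- Each edge meets each part of a bipartition exactly once. -/
lemma filter_card_one (G : SimpleGraph V) [DecidableRel G.Adj] (A B : Finset V)
    (hdis : Disjoint A B)
    (hbip : ∀ u v, G.Adj u v → (u ∈ A ∧ v ∈ B) ∨ (u ∈ B ∧ v ∈ A)) :
    ∀ e ∈ G.edgeFinset, (A.filter (fun v => v ∈ e)).card = 1 := by
  intro e
  induction e using Sym2.ind with
  | _ a b =>
    intro he
    rw [SimpleGraph.mem_edgeFinset, SimpleGraph.mem_edgeSet] at he
    rcases hbip a b he with ⟨ha, hb⟩ | ⟨ha, hb⟩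
    · have hbA : b ∉ A := fun hb' => (Finset.disjoint_left.mp hdis hb') hb
      have : A.filter (fun v => v ∈ s(a, b)) = {a} := by
        ext v
        simp only [Finset.mem_filter, Sym2.mem_iff, Finset.mem_singleton]
        constructor
        · rintro ⟨hv, rfl | rfl⟩
          · rfl
          · exact absurd hv hbA
        · rintro rfl; exact ⟨ha, Or.inl rfl⟩
      rw [this, Finset.card_singleton]
    · have haA : a ∉ A := fun ha' => (Finset.disjoint_left.mp hdis ha') ha
      have : A.filter (fun v => v ∈ s(a, b)) = {b} := by
        ext v
        simp only [Finset.mem_filter, Sym2.mem_iff, Finset.mem_singleton]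
        constructor
        · rintro ⟨hv, rfl | rfl⟩
          · exact absurd hv haA
          · rfl
        · rintro rfl; exact ⟨hb, Or.inr rfl⟩
      rw [this, Finset.card_singleton]

end LocalAntimagic
end Helpers

open LocalAntimagic in
/-- `χ_la(G) = 2` iff `G` is bipartite with at most one pendant
and admits a local antimagic labeling whose induced labels are the two distinct
integers `(q(q+1)/2)/|V₁|` and `(q(q+1)/2)/|V₂|` on the respective parts. -/
theorem stmt19 {V : Type*} [Fintype V] [DecidableEq V] (G : SimpleGraph V)
    [DecidableRel G.Adj] (hconn : G.Connected) :
    chiLA G = 2 ↔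
      ∃ V1 V2 : Finset V, Disjoint V1 V2 ∧ V1 ∪ V2 = Finset.univ ∧
        (∀ u v, G.Adj u v → (u ∈ V1 ∧ v ∈ V2) ∨ (u ∈ V2 ∧ v ∈ V1)) ∧
        (Finset.univ.filter fun v => G.degree v = 1).card ≤ 1 ∧
        ∃ f : Sym2 V → ℕ, IsLocalAntimagic G f ∧
          (∀ v ∈ V1, inducedSum G f v =
            G.edgeFinset.card * (G.edgeFinset.card + 1) / 2 / V1.card) ∧
          (∀ v ∈ V2, inducedSum G f v =
            G.edgeFinset.card * (G.edgeFinset.card + 1) / 2 / V2.card) ∧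
          V1.card ∣ G.edgeFinset.card * (G.edgeFinset.card + 1) / 2 ∧
          V2.card ∣ G.edgeFinset.card * (G.edgeFinset.card + 1) / 2 ∧
          G.edgeFinset.card * (G.edgeFinset.card + 1) / 2 / V1.card ≠
            G.edgeFinset.card * (G.edgeFinset.card + 1) / 2 / V2.card := by
  classical
  constructor
  · -- forward direction
    intro h2
    unfold chiLA at h2
    set S : Set ℕ∞ := {n | ∃ f, IsLocalAntimagic G f ∧ (colorCount G f : ℕ∞) = n} with hS
    have hne : S.Nonempty := by
      by_contra hns
      rw [Set.not_nonempty_iff_eq_empty] at hns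
      rw [hns, sInf_empty] at h2
      exact (by simp : (⊤ : ℕ∞) ≠ 2) h2
    have hmem : sInf S ∈ S := csInf_mem hne
    rw [h2] at hmem
    obtain ⟨f, hf, hcol⟩ := hmem
    have hcol2 : colorCount G f = 2 := by exact_mod_cast hcol
    unfold colorCount at hcol2
    obtain ⟨c1, c2, hcne, himg⟩ := Finset.card_eq_two.mp hcol2
    have hval : ∀ v, inducedSum G f v = c1 ∨ inducedSum G f v = c2 := by
      intro v
      have h := Finset.mem_image_of_mem (inducedSum G f) (Finset.mem_univ v)
      rw [himg] at h
      simpa using h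
    set V1 : Finset V := univ.filter (fun v => inducedSum G f v = c1) with hV1
    set V2 : Finset V := univ.filter (fun v => inducedSum G f v = c2) with hV2
    have hdis : Disjoint V1 V2 := by
      rw [Finset.disjoint_left]
      intro v hv1 hv2
      rw [hV1, Finset.mem_filter] at hv1
      rw [hV2, Finset.mem_filter] at hv2
      exact hcne (hv1.2 ▸ hv2.2 ▸ rfl)
    have hun : V1 ∪ V2 = univ := by
      ext v
      simp only [hV1, hV2, Finset.mem_union, Finset.mem_filter, Finset.mem_univ, true_and,
        iff_true]
      exact hval v
    have hbip : ∀ u v, G.Adj u v → (u ∈ V1 ∧ v ∈ V2) ∨ (u ∈ V2 ∧ v ∈ V1) := by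
      intro u v huv
      have hne' := hf.2 huv
      simp only [hV1, hV2, Finset.mem_filter, Finset.mem_univ, true_and]
      rcases hval u with h | h <;> rcases hval v with h' | h'
      · exact absurd (h.trans h'.symm) hne'
      · exact Or.inl ⟨h, h'⟩
      · exact Or.inr ⟨h, h'⟩
      · exact absurd (h.trans h'.symm) hne'
    -- there is at least one edge
    have hexv1 : ∃ v, inducedSum G f v = c1 := by
      have h : c1 ∈ Finset.image (inducedSum G f) univ := by rw [himg]; simp
      simpa using h
    have hexv2 : ∃ v, inducedSum G f v = c2 := by
      have h : c2 ∈ Finset.image (inducedSum G f) univ := by rw [himg]; simp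
      simpa using h
    have hq1 : 1 ≤ G.edgeFinset.card := by
      by_contra hq0
      have hq0' : G.edgeFinset = ∅ := by
        rw [← Finset.card_eq_zero]; omega
      have hzero : ∀ v, inducedSum G f v = 0 := by
        intro v
        unfold inducedSum
        rw [SimpleGraph.incidenceFinset_eq_filter, hq0', Finset.filter_empty, Finset.sum_empty]
      obtain ⟨v1, hv1⟩ := hexv1
      obtain ⟨v2, hv2⟩ := hexv2
      exact hcne ((hv1.symm.trans (hzero v1)).trans (hv2.symm.trans (hzero v2)).symm)
    have hbip' : ∀ u v, G.Adj u v → (u ∈ V2 ∧ v ∈ V1) ∨ (u ∈ V1 ∧ v ∈ V2) := by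
      intro u v huv
      exact (hbip u v huv).symm
    have hone1 := filter_card_one G V1 V2 hdis hbip
    have hone2 := filter_card_one G V2 V1 hdis.symm hbip'
    have hsum1 : ∑ v ∈ V1, inducedSum G f v = ∑ e ∈ G.edgeFinset, f e :=
      sum_part G f V1 hone1
    have hsum2 : ∑ v ∈ V2, inducedSum G f v = ∑ e ∈ G.edgeFinset, f e :=
      sum_part G f V2 hone2
    have hconst1 : ∑ v ∈ V1, inducedSum G f v = V1.card * c1 := by
      rw [Finset.sum_eq_card_nsmul (fun v hv => (Finset.mem_filter.mp hv).2), smul_eq_mul]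
    have hconst2 : ∑ v ∈ V2, inducedSum G f v = V2.card * c2 := by
      rw [Finset.sum_eq_card_nsmul (fun v hv => (Finset.mem_filter.mp hv).2), smul_eq_mul]
    have hlab := sum_labels G f hf.1
    have e1 : V1.card * c1 * 2 = G.edgeFinset.card * (G.edgeFinset.card + 1) := by
      rw [← hconst1, hsum1, hlab]
    have e2 : V2.card * c2 * 2 = G.edgeFinset.card * (G.edgeFinset.card + 1) := by
      rw [← hconst2, hsum2, hlab]
    have hV1pos : 0 < V1.card := by
      obtain ⟨v, hv⟩ := hexv1
      exact Finset.card_pos.mpr ⟨v, by rw [hV1, Finset.mem_filter]; exact ⟨Finset.mem_univ v, hv⟩⟩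
    have hV2pos : 0 < V2.card := by
      obtain ⟨v, hv⟩ := hexv2
      exact Finset.card_pos.mpr ⟨v, by rw [hV2, Finset.mem_filter]; exact ⟨Finset.mem_univ v, hv⟩⟩
    have hT1 : G.edgeFinset.card * (G.edgeFinset.card + 1) / 2 = V1.card * c1 := by omega
    have hT2 : G.edgeFinset.card * (G.edgeFinset.card + 1) / 2 = V2.card * c2 := by omega
    have hc1eq : G.edgeFinset.card * (G.edgeFinset.card + 1) / 2 / V1.card = c1 := by
      rw [hT1, Nat.mul_div_cancel_left _ hV1pos]
    have hc2eq : G.edgeFinset.card * (G.edgeFinset.card + 1) / 2 / V2.card = c2 := by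
      rw [hT2, Nat.mul_div_cancel_left _ hV2pos]
    -- at most one pendant vertex
    have hpend : (univ.filter fun v => G.degree v = 1).card ≤ 1 := by
      rw [Finset.card_le_one]
      intro u hu w hw
      rw [Finset.mem_filter] at hu hw
      by_contra huw
      -- unique incident edges
      have hdu : (G.incidenceFinset u).card = 1 := by
        rw [SimpleGraph.card_incidenceFinset_eq_degree]; exact hu.2
      have hdw : (G.incidenceFinset w).card = 1 := by
        rw [SimpleGraph.card_incidenceFinset_eq_degree]; exact hw.2
      obtain ⟨eu, heu⟩ := Finset.card_eq_one.mp hdu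
      obtain ⟨ew, hew⟩ := Finset.card_eq_one.mp hdw
      have heuI : eu ∈ G.incidenceSet u := by
        rw [← SimpleGraph.mem_incidenceFinset, heu]; exact Finset.mem_singleton_self eu
      have hewI : ew ∈ G.incidenceSet w := by
        rw [← SimpleGraph.mem_incidenceFinset, hew]; exact Finset.mem_singleton_self ew
      have hsumu : inducedSum G f u = f eu := by
        unfold inducedSum; rw [heu, Finset.sum_singleton]
      have hsumw : inducedSum G f w = f ew := by
        unfold inducedSum; rw [hew, Finset.sum_singleton]
      by_cases hse : inducedSum G f u = inducedSum G f w
      · -- same sums: same edge, so adjacent, contradiction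
        have hfe : f eu = f ew := by rw [← hsumu, ← hsumw, hse]
        have heq : eu = ew := hf.1.injOn heuI.1 hewI.1 hfe
        have huw' : eu = s(u, w) :=
          (Sym2.mem_and_mem_iff huw).mp ⟨heuI.2, heq ▸ hewI.2⟩
        have hadj : G.Adj u w := by
          rw [← SimpleGraph.mem_edgeSet, ← huw']; exact heuI.1
        exact hf.2 hadj hse
      · -- different sums: c1, c2 ≤ q and the counting contradiction
        have hbu : f eu ∈ Set.Icc 1 G.edgeFinset.card := hf.1.mapsTo heuI.1
        have hbw : f ew ∈ Set.Icc 1 G.edgeFinset.card := hf.1.mapsTo hewI.1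
        have hcb : c1 ≤ G.edgeFinset.card ∧ c2 ≤ G.edgeFinset.card := by
          rcases hval u with h | h <;> rcases hval w with h' | h'
          · exact absurd (h.trans h'.symm) hse
          · exact ⟨h ▸ hsumu ▸ hbu.2, h' ▸ hsumw ▸ hbw.2⟩
          · exact ⟨h' ▸ hsumw ▸ hbw.2, h ▸ hsumu ▸ hbu.2⟩
          · exact absurd (h.trans h'.symm) hse
        have hcards : V1.card + V2.card = Fintype.card V := by
          rw [← Finset.card_union_of_disjoint hdis, hun, Finset.card_univ]
        have hVle := card_le_edges G hconn
        have hA : G.edgeFinset.card + 1 ≤ 2 * V1.card := by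
          have h' : (G.edgeFinset.card + 1) * G.edgeFinset.card
              ≤ (2 * V1.card) * G.edgeFinset.card := by
            calc (G.edgeFinset.card + 1) * G.edgeFinset.card
                = G.edgeFinset.card * (G.edgeFinset.card + 1) := Nat.mul_comm _ _
              _ = V1.card * c1 * 2 := e1.symm
              _ ≤ V1.card * G.edgeFinset.card * 2 :=
                  Nat.mul_le_mul_right 2 (Nat.mul_le_mul_left _ hcb.1)
              _ = (2 * V1.card) * G.edgeFinset.card := by ring
          exact Nat.le_of_mul_le_mul_right h' hq1
        have hB : G.edgeFinset.card + 1 ≤ 2 * V2.card := by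
          have h' : (G.edgeFinset.card + 1) * G.edgeFinset.card
              ≤ (2 * V2.card) * G.edgeFinset.card := by
            calc (G.edgeFinset.card + 1) * G.edgeFinset.card
                = G.edgeFinset.card * (G.edgeFinset.card + 1) := Nat.mul_comm _ _
              _ = V2.card * c2 * 2 := e2.symm
              _ ≤ V2.card * G.edgeFinset.card * 2 :=
                  Nat.mul_le_mul_right 2 (Nat.mul_le_mul_left _ hcb.2)
              _ = (2 * V2.card) * G.edgeFinset.card := by ring
          exact Nat.le_of_mul_le_mul_right h' hq1
        have hVeq : V1.card = V2.card := by omega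
        have : V1.card * c1 = V1.card * c2 := by rw [hVeq] at e1 ⊢; omega
        exact hcne (Nat.eq_of_mul_eq_mul_left hV1pos this)
    refine ⟨V1, V2, hdis, hun, hbip, hpend, f, hf, ?_, ?_, ?_, ?_, ?_⟩
    · intro v hv
      rw [hV1, Finset.mem_filter] at hv
      rw [hv.2, hc1eq]
    · intro v hv
      rw [hV2, Finset.mem_filter] at hv
      rw [hv.2, hc2eq]
    · exact ⟨c1, hT1⟩
    · exact ⟨c2, hT2⟩
    · rw [hc1eq, hc2eq]; exact hcne
  · -- reverse direction
    rintro ⟨V1, V2, hdis, hun, hbip, _hpend, f, hf, hl1, hl2, _hd1, _hd2, hne12⟩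
    have hq1 : 1 ≤ G.edgeFinset.card := by
      by_contra hq0
      have hq0' : G.edgeFinset.card = 0 := by omega
      rw [hq0'] at hne12
      simp at hne12
    obtain ⟨e, he⟩ := Finset.card_pos.mp hq1
    obtain ⟨a, b, hab⟩ : ∃ a b, G.Adj a b := by
      induction e using Sym2.ind with
      | _ a b =>
        rw [SimpleGraph.mem_edgeFinset, SimpleGraph.mem_edgeSet] at he
        exact ⟨a, b, he⟩
    have hV12 : (∃ v, v ∈ V1) ∧ ∃ v, v ∈ V2 := by
      rcases hbip a b hab with ⟨ha, hb⟩ | ⟨ha, hb⟩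
      · exact ⟨⟨a, ha⟩, ⟨b, hb⟩⟩
      · exact ⟨⟨b, hb⟩, ⟨a, ha⟩⟩
    set c1 := G.edgeFinset.card * (G.edgeFinset.card + 1) / 2 / V1.card with hc1
    set c2 := G.edgeFinset.card * (G.edgeFinset.card + 1) / 2 / V2.card with hc2
    have himg : Finset.image (inducedSum G f) univ = {c1, c2} := by
      ext n
      simp only [Finset.mem_image, Finset.mem_univ, true_and, Finset.mem_insert,
        Finset.mem_singleton]
      constructor
      · rintro ⟨v, rfl⟩
        have hv : v ∈ V1 ∪ V2 := by rw [hun]; exact Finset.mem_univ v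
        rcases Finset.mem_union.mp hv with h | h
        · exact Or.inl (hl1 v h)
        · exact Or.inr (hl2 v h)
      · rintro (rfl | rfl)
        · obtain ⟨v, hv⟩ := hV12.1
          exact ⟨v, hl1 v hv⟩
        · obtain ⟨v, hv⟩ := hV12.2
          exact ⟨v, hl2 v hv⟩
    have hcol : colorCount G f = 2 := by
      unfold colorCount
      rw [himg, Finset.card_insert_of_notMem (by simpa using hne12), Finset.card_singleton]
    unfold chiLA
    apply le_antisymm
    · exact sInf_le ⟨f, hf, by rw [hcol]; norm_cast⟩
    · apply le_sInf
      rintro n ⟨g, hg, rfl⟩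
      have h2 : 1 < colorCount G g := by
        unfold colorCount
        rw [Finset.one_lt_card]
        exact ⟨inducedSum G g a, Finset.mem_image_of_mem _ (Finset.mem_univ a),
          inducedSum G g b, Finset.mem_image_of_mem _ (Finset.mem_univ b), hg.2 hab⟩
      have h2' : 2 ≤ colorCount G g := h2
      exact_mod_cast h2'
end
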